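/- Assume a_X > b_X > 0, a_Y + b_Y > 0, and b_Y > a_Y. Then for every x ∈ (1/2, 1) with x ≥ b_Y/(a_Y + b_Y), one has L'(x) > 0. -/

import Mathlib

open Real Filter Set Topology

/-- QRE response of the second player. -/
noncomputable def qreY (aY bY Ty : ℝ) (x : ℝ) : ℝ :=
  (1 + Real.exp ((bY - (aY + bY) * x) / Ty))⁻¹

/-- QRE temperature curve for the first player. -/
noncomputable def qreTX (aX bX aY bY Ty : ℝ) (x : ℝ) : ℝ :=
  (bX - (aX + bX) * qreY aY bY Ty x) / Real.log (1 / x - 1)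

/-- The auxiliary function L(x) = y(x) + x(1-x) ln(1/x-1) y'(x). -/
noncomputable def qreL (aY bY Ty : ℝ) (x : ℝ) : ℝ :=
  qreY aY bY Ty x + x * (1 - x) * Real.log (1 / x - 1) * deriv (qreY aY bY Ty) x

theorem stmt_12 (aX bX aY bY Ty : ℝ) (hTy : 0 < Ty)
    (hab : aX > bX) (hbX : bX > 0) (hY : aY + bY > 0) (hba : bY > aY) :
    ∀ x ∈ Set.Ioo (1/2 : ℝ) 1, bY / (aY + bY) ≤ x →
      0 < deriv (qreL aY bY Ty) x := by
  intro x hx hxb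
  obtain ⟨hx1, hx2⟩ := hx
  have hTy' : Ty ≠ 0 := ne_of_gt hTy
  set c : ℝ := (aY + bY) / Ty with hc
  have hc0 : 0 < c := div_pos hY hTy
  set E : ℝ → ℝ := fun t => Real.exp ((bY - (aY + bY) * t) / Ty) with hE
  have hEpos : ∀ t, 0 < E t := fun t => Real.exp_pos _
  have hs : ∀ t, (0:ℝ) < 1 + E t := fun t => by have := hEpos t; linarith
  have hsne : ∀ t, (1 + E t) ≠ 0 := fun t => ne_of_gt (hs t)
  have hEd : ∀ t, HasDerivAt E (-c * E t) t := by
    intro t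
    have h1 : HasDerivAt (fun s => (bY - (aY + bY) * s) / Ty) (-c) t := by
      have h := (((hasDerivAt_id t).const_mul (aY + bY)).const_sub bY).div_const Ty
      refine h.congr_deriv ?_
      rw [hc]; ring
    have h2 := h1.exp
    convert h2 using 1
    ring
  have hYd : ∀ t, HasDerivAt (qreY aY bY Ty) (c * E t * ((1 + E t)^2)⁻¹) t := by
    intro t
    have h := ((hasDerivAt_const t (1:ℝ)).add (hEd t)).inv (hsne t)
    refine h.congr_deriv ?_
    simp only [Pi.add_apply]
    field_simp
    ring
  have hderiv : deriv (qreY aY bY Ty) = fun t => c * E t * ((1 + E t)^2)⁻¹ :=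
    funext fun t => (hYd t).deriv
  have hLeq : qreL aY bY Ty = fun t =>
      (1 + E t)⁻¹ + t * (1 - t) * Real.log (1 / t - 1) * (c * E t * ((1 + E t)^2)⁻¹) := by
    funext t
    simp only [qreL, qreY, hderiv]
    rfl
  -- facts at x
  have hx0 : (0:ℝ) < x := by linarith
  have hxne : x ≠ 0 := ne_of_gt hx0
  have h1x : (0:ℝ) < 1 - x := by linarith
  have hv : (0:ℝ) < 1/x - 1 := by
    have h : 1 < 1/x := by rw [lt_div_iff₀ hx0]; linarith
    linarith
  have hvlt : 1/x - 1 < 1 := by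
    have h : 1/x < 2 := by rw [div_lt_iff₀ hx0]; linarith
    linarith
  have hvne : (1/x - 1) ≠ 0 := ne_of_gt hv
  have hl : Real.log (1/x - 1) < 0 := Real.log_neg hv hvlt
  have hE1 : E x ≤ 1 := by
    rw [hE]
    rw [Real.exp_le_one_iff]
    have hb : bY ≤ x * (aY + bY) := (div_le_iff₀ hY).mp hxb
    have : bY - (aY + bY) * x ≤ 0 := by linarith [hb]
    exact div_nonpos_of_nonpos_of_nonneg this (le_of_lt hTy)
  -- derivatives at x
  have hlog : HasDerivAt (fun t => Real.log (1/t - 1)) (-(x*(1-x))⁻¹) x := by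
    have h1 : HasDerivAt (fun t : ℝ => 1/t - 1) (-(x^2)⁻¹) x := by
      simpa [one_div] using (hasDerivAt_inv hxne).sub_const 1
    have h2 := h1.log hvne
    refine h2.congr_deriv ?_
    field_simp
  have hq : HasDerivAt (fun t : ℝ => t * (1 - t)) (1 - 2*x) x := by
    have h := (hasDerivAt_id x).mul ((hasDerivAt_id x).const_sub 1)
    refine h.congr_deriv ?_
    simp only [id_eq]; ring
  have hA : HasDerivAt (fun t => (1 + E t)⁻¹) (c * E x * ((1 + E x)^2)⁻¹) x := by
    have h := ((hasDerivAt_const x (1:ℝ)).add (hEd x)).inv (hsne x)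
    refine h.congr_deriv ?_
    simp only [Pi.add_apply]
    field_simp
    ring
  have hpow : HasDerivAt (fun t => (1 + E t)^2) (2*(1+E x)*(-c*E x)) x := by
    have h := ((hasDerivAt_const x (1:ℝ)).add (hEd x)).pow 2
    refine h.congr_deriv ?_; simp only [Pi.add_apply]; ring
  have hsq_ne : ((1+E x)^2) ≠ 0 := pow_ne_zero _ (hsne x)
  have hY2 : HasDerivAt (fun t => c * E t * ((1 + E t)^2)⁻¹)
      (c * (-c*E x) * ((1+E x)^2)⁻¹ + (c*E x) * (-(2*(1+E x)*(-c*E x)) / ((1+E x)^2)^2)) x := by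
    exact ((hEd x).const_mul c).mul (hpow.inv hsq_ne)
  have hg := (hq.mul hlog).mul hY2
  have hL : HasDerivAt (fun t =>
      (1 + E t)⁻¹ + t * (1 - t) * Real.log (1 / t - 1) * (c * E t * ((1 + E t)^2)⁻¹))
      (c * E x * ((1 + E x)^2)⁻¹ +
        (((1 - 2*x) * Real.log (1/x - 1) + x*(1-x) * (-(x*(1-x))⁻¹)) * (c * E x * ((1 + E x)^2)⁻¹) +
          x*(1-x) * Real.log (1/x - 1) *
            (c * (-c*E x) * ((1+E x)^2)⁻¹ + (c*E x) * (-(2*(1+E x)*(-c*E x)) / ((1+E x)^2)^2)))) x :=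
    hA.add hg
  rw [hLeq, hL.deriv]
  have hkey : c * E x * ((1 + E x)^2)⁻¹ +
        (((1 - 2*x) * Real.log (1/x - 1) + x*(1-x) * (-(x*(1-x))⁻¹)) * (c * E x * ((1 + E x)^2)⁻¹) +
          x*(1-x) * Real.log (1/x - 1) *
            (c * (-c*E x) * ((1+E x)^2)⁻¹ + (c*E x) * (-(2*(1+E x)*(-c*E x)) / ((1+E x)^2)^2)))
      = Real.log (1/x - 1) *
        ((1 - 2*x) * (c * E x) * ((1+E x)^2)⁻¹ +
         x*(1-x) * c^2 * E x * (E x - 1) * ((1+E x)^3)⁻¹) := by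
    have hxx : x*(1-x) ≠ 0 := by positivity
    field_simp
    ring
  rw [hkey]
  apply mul_pos_of_neg_of_neg hl
  have t1 : (1 - 2*x) * (c * E x) * ((1+E x)^2)⁻¹ < 0 := by
    apply mul_neg_of_neg_of_pos
    · apply mul_neg_of_neg_of_pos
      · linarith
      · positivity
    · positivity
  have t2 : x*(1-x) * c^2 * E x * (E x - 1) * ((1+E x)^3)⁻¹ ≤ 0 := by
    apply mul_nonpos_of_nonpos_of_nonneg
    · apply mul_nonpos_of_nonneg_of_nonpos
      · positivity
      · linarith [hE1]
    · positivity
  linarith
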